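/- Assume X spans V with dim V = s. Every maximal nested set S of irreducible subsets of X has exactly s elements; moreover for A ∈ S with maximal proper subelements B_1,...,B_r ∈ S contained in A, the union C = B_1 ∪ ... ∪ B_r is complete and dim span(A) = dim span(C) + 1. -/

import Mathlib

/-- The span of the sublist `A ⊆ X`. -/
def spanOf (K : Type*) {V ι : Type*} [Field K] [AddCommGroup V] [Module K V]
    (X : ι → V) (A : Set ι) : Submodule K V :=
  Submodule.span K (X '' A)

/-- `A` is complete: `A = X ∩ span(A)`. -/
def IsCompleteSub (K : Type*) {V ι : Type*} [Field K] [AddCommGroup V] [Module K V]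
    (X : ι → V) (A : Set ι) : Prop :=
  A = {i | X i ∈ spanOf K X A}

/-- A decomposition `A = A₁ ∪ A₂` into nonempty parts with
`span(A) = span(A₁) ⊕ span(A₂)`. -/
def IsDecomp (K : Type*) {V ι : Type*} [Field K] [AddCommGroup V] [Module K V]
    (X : ι → V) (A A₁ A₂ : Set ι) : Prop :=
  A₁.Nonempty ∧ A₂.Nonempty ∧ Disjoint A₁ A₂ ∧ A₁ ∪ A₂ = A ∧
    Disjoint (spanOf K X A₁) (spanOf K X A₂) ∧
    spanOf K X A₁ ⊔ spanOf K X A₂ = spanOf K X A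

/-- `A` is irreducible: complete, nonempty, and with no nontrivial decomposition. -/
def IsIrred (K : Type*) {V ι : Type*} [Field K] [AddCommGroup V] [Module K V]
    (X : ι → V) (A : Set ι) : Prop :=
  IsCompleteSub K X A ∧ A.Nonempty ∧ ¬ ∃ A₁ A₂, IsDecomp K X A A₁ A₂

/-- `P` is the decomposition of `A` into irreducibles (as an unordered family):
all members are irreducible, their union is `A`, and their spans are independent
with supremum `span(A)`. -/
def IsIrredDecompFam (K : Type*) {V ι : Type*} [Field K] [AddCommGroup V] [Module K V]
    (X : ι → V) (P : Set (Set ι)) (A : Set ι) : Prop :=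
  (∀ B ∈ P, IsIrred K X B) ∧ ⋃₀ P = A ∧
  (∀ B ∈ P, Disjoint (spanOf K X B) (⨆ C ∈ P \ {B}, spanOf K X C)) ∧
  (⨆ B ∈ P, spanOf K X B) = spanOf K X A

/-- A family `S` of irreducibles is nested if for every subfamily `F` of pairwise
incomparable elements, `⋃₀ F` is complete and `F` is its decomposition into
irreducibles. -/
def IsNested (K : Type*) {V ι : Type*} [Field K] [AddCommGroup V] [Module K V]
    (X : ι → V) (S : Set (Set ι)) : Prop :=
  (∀ A ∈ S, IsIrred K X A) ∧
  ∀ F ⊆ S, (F.Pairwise fun A B => ¬ A ⊆ B ∧ ¬ B ⊆ A) →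
    IsCompleteSub K X (⋃₀ F) ∧ IsIrredDecompFam K X F (⋃₀ F)

section Basic
variable {K V ι : Type*} [Field K] [AddCommGroup V] [Module K V] (X : ι → V)

theorem spanOf_mono {A B : Set ι} (h : A ⊆ B) : spanOf K X A ≤ spanOf K X B :=
  Submodule.span_mono (Set.image_mono h)

theorem mem_spanOf {A : Set ι} {i : ι} (h : i ∈ A) : X i ∈ spanOf K X A :=
  Submodule.subset_span ⟨i, h, rfl⟩

theorem spanOf_union (A B : Set ι) :
    spanOf K X (A ∪ B) = spanOf K X A ⊔ spanOf K X B := by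
  rw [spanOf, Set.image_union, Submodule.span_union]; rfl

theorem spanOf_empty : spanOf K X (∅ : Set ι) = ⊥ := by
  simp [spanOf]

theorem spanOf_sUnion (P : Set (Set ι)) :
    spanOf K X (⋃₀ P) = ⨆ B ∈ P, spanOf K X B := by
  rw [spanOf, Set.sUnion_eq_biUnion, Set.image_iUnion₂, Submodule.span_iUnion₂]; rfl

theorem biSup_spanOf_le {P : Set (Set ι)} {A : Set ι} (h : ∀ B ∈ P, B ⊆ A) :
    (⨆ B ∈ P, spanOf K X B) ≤ spanOf K X A :=
  iSup₂_le fun B hB => spanOf_mono X (h B hB)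

/-- closure -/
def clo (K : Type*) {V ι : Type*} [Field K] [AddCommGroup V] [Module K V]
    (X : ι → V) (A : Set ι) : Set ι := {i | X i ∈ spanOf K X A}

theorem subset_clo (A : Set ι) : A ⊆ clo K X A := fun _ h => mem_spanOf X h

theorem spanOf_clo (A : Set ι) : spanOf K X (clo K X A) = spanOf K X A := by
  refine le_antisymm ?_ (spanOf_mono X (subset_clo X A))
  rw [spanOf, Submodule.span_le]
  rintro v ⟨i, hi, rfl⟩; exact hi

theorem clo_complete (A : Set ι) : IsCompleteSub K X (clo K X A) := by
  unfold IsCompleteSub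
  rw [spanOf_clo]; rfl

theorem mem_of_complete_of_mem_span {A : Set ι} (hA : IsCompleteSub K X A) {i : ι}
    (h : X i ∈ spanOf K X A) : i ∈ A := by
  rw [hA]; exact h

/-- key helper: disjointness with a sup -/
theorem disjoint_sup_helper {p q a b c : Submodule K V} (ha : a ≤ p) (hb : b ≤ p)
    (hc : c ≤ q) (hpq : Disjoint p q) (hab : Disjoint a b) : Disjoint a (b ⊔ c) := by
  rw [Submodule.disjoint_def] at *
  intro v hva hvbc
  obtain ⟨w, hw, u, hu, rfl⟩ := Submodule.mem_sup.1 hvbc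
  have hup : u ∈ p := by
    have : (w + u) - w ∈ p := sub_mem (ha hva) (hb hw)
    simpa using this
  have hu0 : u = 0 := hpq u hup (hc hu)
  subst hu0
  rw [add_zero] at *
  exact hab _ hva hw

variable (hX0 : ∀ i, X i ≠ 0)
include hX0

theorem complete_part {D D₁ D₂ : Set ι} (hD : IsCompleteSub K X D)
    (hdisj : Disjoint (spanOf K X D₁) (spanOf K X D₂)) (hu : D₁ ∪ D₂ = D) :
    IsCompleteSub K X D₁ := by
  apply Set.eq_of_subset_of_subset (subset_clo X D₁)
  intro i hi
  have hiD : i ∈ D := mem_of_complete_of_mem_span X hD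
    (spanOf_mono X (hu ▸ Set.subset_union_left (s := D₁) (t := D₂)) hi)
  rw [← hu] at hiD
  rcases hiD with h | h
  · exact h
  · exact absurd (Submodule.disjoint_def.1 hdisj (X i) hi (mem_spanOf X h)) (hX0 i)

theorem set_disjoint_of_span_disjoint {D₁ D₂ : Set ι}
    (hdisj : Disjoint (spanOf K X D₁) (spanOf K X D₂)) : Disjoint D₁ D₂ := by
  rw [Set.disjoint_left]
  intro i h1 h2
  exact hX0 i (Submodule.disjoint_def.1 hdisj (X i) (mem_spanOf X h1) (mem_spanOf X h2))

/-- existence of irreducible decompositions of complete finite sets -/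
theorem exists_irredDecompFam : ∀ (n : ℕ) (D : Set ι), D.Finite → D.ncard ≤ n →
    IsCompleteSub K X D → ∃ P, IsIrredDecompFam K X P D := by
  intro n
  induction n with
  | zero =>
    intro D hfin hn hD
    have : D = ∅ := by
      rw [← Set.ncard_eq_zero hfin]; omega
    subst this
    refine ⟨∅, by simp, by simp, by simp, by simp [spanOf_empty]⟩
  | succ n ih =>
    intro D hfin hn hD
    rcases Set.eq_empty_or_nonempty D with rfl | hne
    · refine ⟨∅, by simp, by simp, by simp, by simp [spanOf_empty]⟩
    by_cases hirr : ∃ A₁ A₂, IsDecomp K X D A₁ A₂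
    · obtain ⟨D₁, D₂, h1, h2, hdisjset, hu, hdisj, hsup⟩ := hirr
      have hc1 : IsCompleteSub K X D₁ := complete_part X hX0 hD hdisj hu
      have hc2 : IsCompleteSub K X D₂ := complete_part X hX0 hD hdisj.symm (Set.union_comm D₁ D₂ ▸ hu)
      have hsub1 : D₁ ⊆ D := hu ▸ Set.subset_union_left
      have hsub2 : D₂ ⊆ D := hu ▸ Set.subset_union_right
      have hlt1 : D₁.ncard < D.ncard := by
        apply Set.ncard_lt_ncard _ hfin
        refine ⟨hsub1, fun hcon => ?_⟩
        obtain ⟨i, hi⟩ := h2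
        exact Set.disjoint_left.1 hdisjset (hcon (hsub2 hi)) hi
      have hlt2 : D₂.ncard < D.ncard := by
        apply Set.ncard_lt_ncard _ hfin
        refine ⟨hsub2, fun hcon => ?_⟩
        obtain ⟨i, hi⟩ := h1
        exact Set.disjoint_left.1 hdisjset hi (hcon (hsub1 hi))
      obtain ⟨P₁, hP1i, hP1u, hP1d, hP1s⟩ := ih D₁ (hfin.subset hsub1) (by omega) hc1
      obtain ⟨P₂, hP2i, hP2u, hP2d, hP2s⟩ := ih D₂ (hfin.subset hsub2) (by omega) hc2
      have hmem1 : ∀ B ∈ P₁, B ⊆ D₁ := fun B hB => hP1u ▸ Set.subset_sUnion_of_mem hB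
      have hmem2 : ∀ B ∈ P₂, B ⊆ D₂ := fun B hB => hP2u ▸ Set.subset_sUnion_of_mem hB
      refine ⟨P₁ ∪ P₂, ?_, ?_, ?_, ?_⟩
      · rintro B (h | h); exacts [hP1i B h, hP2i B h]
      · rw [Set.sUnion_union, hP1u, hP2u, hu]
      · -- disjointness
        rintro B (hB | hB)
        · have key : (⨆ C ∈ (P₁ ∪ P₂) \ {B}, spanOf K X C) ≤
              (⨆ C ∈ P₁ \ {B}, spanOf K X C) ⊔ (⨆ C ∈ P₂, spanOf K X C) := by
            refine iSup₂_le fun C hC => ?_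
            rcases hC.1 with h | h
            · exact le_sup_of_le_left (le_biSup _ ⟨h, hC.2⟩)
            · exact le_sup_of_le_right (le_biSup _ h)
          refine Disjoint.mono_right key ?_
          refine disjoint_sup_helper (p := spanOf K X D₁) (q := spanOf K X D₂)
            (spanOf_mono X (hmem1 B hB)) ?_ ?_ hdisj (hP1d B hB)
          · exact biSup_spanOf_le X (fun C hC => (hmem1 C hC.1))
          · exact biSup_spanOf_le X hmem2
        · have key : (⨆ C ∈ (P₁ ∪ P₂) \ {B}, spanOf K X C) ≤
              (⨆ C ∈ P₂ \ {B}, spanOf K X C) ⊔ (⨆ C ∈ P₁, spanOf K X C) := by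
            refine iSup₂_le fun C hC => ?_
            rcases hC.1 with h | h
            · exact le_sup_of_le_right (le_biSup _ h)
            · exact le_sup_of_le_left (le_biSup _ ⟨h, hC.2⟩)
          refine Disjoint.mono_right key ?_
          refine disjoint_sup_helper (p := spanOf K X D₂) (q := spanOf K X D₁)
            (spanOf_mono X (hmem2 B hB)) ?_ ?_ hdisj.symm (hP2d B hB)
          · exact biSup_spanOf_le X (fun C hC => (hmem2 C hC.1))
          · exact biSup_spanOf_le X hmem1
      · rw [iSup_union, hP1s, hP2s, hsup]
    · exact ⟨{D}, by simpa using ⟨hD, hne, hirr⟩, by simp, by simp, by simp⟩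
end Basic

def maxBelow {V ι : Type*} (K : Type*) [Field K] [AddCommGroup V] [Module K V]
    (X : ι → V) (S : Set (Set ι)) (A : Set ι) : Set (Set ι) :=
  {B | B ∈ S ∧ B ⊂ A ∧ ∀ B' ∈ S, B' ⊂ A → B ⊆ B' → B' = B}

theorem Set.Finite.exists_maximal_wrt {α β : Type*} [PartialOrder β] (f : α → β) (s : Set α)
    (h : s.Finite) (hs : s.Nonempty) : ∃ a ∈ s, ∀ a' ∈ s, f a ≤ f a' → f a = f a' := by
  obtain ⟨a, ha, hm⟩ := h.exists_maximalFor f s hs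
  exact ⟨a, ha, fun a' ha' hle => le_antisymm hle (hm ha' hle)⟩

theorem Set.Finite.exists_minimal_wrt {α β : Type*} [PartialOrder β] (f : α → β) (s : Set α)
    (h : s.Finite) (hs : s.Nonempty) : ∃ a ∈ s, ∀ a' ∈ s, f a' ≤ f a → f a = f a' := by
  obtain ⟨a, ha, hm⟩ := h.exists_minimalFor f s hs
  exact ⟨a, ha, fun a' ha' hle => le_antisymm (hm ha' hle) hle⟩

section Nested
variable {K V ι : Type*} [Field K] [AddCommGroup V] [Module K V] (X : ι → V)
variable {S : Set (Set ι)}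

theorem nested_incomp_spans (hS : IsNested K X S) {A B : Set ι} (hA : A ∈ S) (hB : B ∈ S)
    (h1 : ¬ A ⊆ B) (h2 : ¬ B ⊆ A) : Disjoint (spanOf K X A) (spanOf K X B) := by
  have hne : A ≠ B := fun h => h1 (h ▸ subset_rfl)
  have hpair : ({A, B} : Set (Set ι)).Pairwise (fun A B => ¬ A ⊆ B ∧ ¬ B ⊆ A) := by
    intro x hx y hy hxy
    rcases hx with rfl | rfl <;> rcases hy with rfl | rfl
    · exact absurd rfl hxy
    · exact ⟨h1, h2⟩
    · exact ⟨h2, h1⟩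
    · exact absurd rfl hxy
  have hsub : ({A, B} : Set (Set ι)) ⊆ S := by
    rintro x (rfl | rfl); exacts [hA, hB]
  obtain ⟨-, ⟨-, -, hdisj, -⟩⟩ := hS.2 {A, B} hsub hpair
  have := hdisj A (by simp)
  rwa [Set.pair_diff_left hne, iSup_singleton] at this

theorem nested_comparable (hS : IsNested K X S) (hX0 : ∀ i, X i ≠ 0) {A B : Set ι}
    (hA : A ∈ S) (hB : B ∈ S) {i : ι} (hiA : i ∈ A) (hiB : i ∈ B) : A ⊆ B ∨ B ⊆ A := by
  by_contra h
  push_neg at h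
  have hdisj := nested_incomp_spans X hS hA hB h.1 h.2
  exact hX0 i (Submodule.disjoint_def.1 hdisj (X i) (mem_spanOf X hiA) (mem_spanOf X hiB))

theorem maxBelow_pairwise {A : Set ι} :
    (maxBelow K X S A).Pairwise (fun A B => ¬ A ⊆ B ∧ ¬ B ⊆ A) := by
  intro B₁ h₁ B₂ h₂ hne
  constructor
  · intro hsub
    exact hne ((h₁.2.2 B₂ h₂.1 h₂.2.1 hsub).symm)
  · intro hsub
    exact hne (h₂.2.2 B₁ h₁.1 h₁.2.1 hsub)

theorem maxBelow_subset {A : Set ι} : maxBelow K X S A ⊆ S := fun _ h => h.1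

theorem sUnion_maxBelow_subset {A : Set ι} : ⋃₀ (maxBelow K X S A) ⊆ A := by
  rintro i ⟨B, hB, hi⟩
  exact hB.2.1.1 hi

/-- every strict subelement lies below a maximal one -/
theorem exists_maxBelow [Fintype ι] {A B : Set ι} (hB : B ∈ S) (hBA : B ⊂ A) :
    ∃ M ∈ maxBelow K X S A, B ⊆ M := by
  have hfin : {B' ∈ S | B ⊆ B' ∧ B' ⊂ A}.Finite := Set.toFinite _
  obtain ⟨M, hM, hmax⟩ := hfin.exists_maximal_wrt id _ ⟨B, hB, subset_rfl, hBA⟩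
  refine ⟨M, ⟨hM.1, hM.2.2, fun B' hB' hB'A hMB' => ?_⟩, hM.2.1⟩
  exact (hmax B' ⟨hB', hM.2.1.trans hMB', hB'A⟩ hMB').symm

/-- every element lies below a maximal element of S -/
theorem exists_maxS [Fintype ι] {B : Set ι} (hB : B ∈ S) :
    ∃ M, (M ∈ S ∧ ∀ B' ∈ S, M ⊆ B' → B' = M) ∧ B ⊆ M := by
  have hfin : {B' ∈ S | B ⊆ B'}.Finite := Set.toFinite _
  obtain ⟨M, hM, hmax⟩ := hfin.exists_maximal_wrt id _ ⟨B, hB, subset_rfl⟩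
  exact ⟨M, ⟨hM.1, fun B' hB' hMB' => (hmax B' ⟨hB', hM.2.trans hMB'⟩ hMB').symm⟩, hM.2⟩

end Nested

section Helper2
variable {K V : Type*} [Field K] [AddCommGroup V] [Module K V]

theorem disjoint_insert_helper {a b w s : Submodule K V} (hb : b ≤ s) (hw : w ≤ s)
    (has : Disjoint a s) (hbw : Disjoint b w) : Disjoint b (a ⊔ w) := by
  rw [Submodule.disjoint_def] at *
  intro v hvb hvaw
  obtain ⟨e, he, u, hu, rfl⟩ := Submodule.mem_sup.1 hvaw
  have he0 : e = 0 := by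
    refine has e he ?_
    have h : e = (e + u) - u := by abel
    exact h ▸ sub_mem (hb hvb) (hw hu)
  subst he0
  rw [zero_add] at *
  exact hbw u hvb hu

end Helper2

section Ext
variable {K V ι : Type*} [Field K] [AddCommGroup V] [Module K V] [Fintype ι] (X : ι → V)
variable (hX0 : ∀ i, X i ≠ 0)
include hX0

theorem ext_lemma {S : Set (Set ι)} (hS : IsNested K X S)
    {C A' : Set ι} (hA' : IsCompleteSub K X A') (hCA : C ⊆ A')
    {x : ι} (hxA : x ∈ A')
    (HB : ∀ B ∈ S, B ⊆ C ∨ A' ⊆ B ∨ (¬ B ⊆ A' ∧ ¬ A' ⊆ B))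
    (H2 : ∀ G ⊆ S, (G.Pairwise fun A B => ¬ A ⊆ B ∧ ¬ B ⊆ A) →
      (∀ B ∈ G, ¬ B ⊆ A' ∧ ¬ A' ⊆ B) →
      Disjoint (spanOf K X A') (⨆ B ∈ G, spanOf K X B) ∧
      IsCompleteSub K X (A' ∪ ⋃₀ G)) :
    ∃ E, IsIrred K X E ∧ x ∈ E ∧ E ⊆ clo K X (C ∪ {x}) ∧ IsNested K X (S ∪ {E}) := by
  classical
  set D := clo K X (C ∪ {x}) with hDdef
  have hDcomp : IsCompleteSub K X D := clo_complete X _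
  have hCxA : C ∪ {x} ⊆ A' := Set.union_subset hCA (by simpa using hxA)
  have hDA : D ⊆ A' := by
    intro i hi
    have hi' : X i ∈ spanOf K X (C ∪ {x}) := hi
    exact mem_of_complete_of_mem_span X hA' (spanOf_mono X hCxA hi')
  have hCD : C ⊆ D := Set.subset_union_left.trans (subset_clo X _)
  obtain ⟨P, hPirr, hPu, hPd, hPs⟩ :=
    exists_irredDecompFam X hX0 (Set.ncard D) D (Set.toFinite D) le_rfl hDcomp
  have hxD : x ∈ D := subset_clo X _ (Or.inr rfl)
  obtain ⟨E, hEP, hxE⟩ : ∃ E ∈ P, x ∈ E := by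
    have hx' : x ∈ ⋃₀ P := by rw [hPu]; exact hxD
    exact hx'
  have hEirr : IsIrred K X E := hPirr E hEP
  have hEsub : E ⊆ D := hPu ▸ Set.subset_sUnion_of_mem hEP
  set W := ⨆ C' ∈ P \ {E}, spanOf K X C' with hWdef
  have hEW : Disjoint (spanOf K X E) W := hPd E hEP
  have hWD : W ≤ spanOf K X D := by
    refine iSup₂_le fun B hB => spanOf_mono X ?_
    exact hPu ▸ Set.subset_sUnion_of_mem hB.1
  have hED : spanOf K X E ≤ spanOf K X D := spanOf_mono X hEsub
  have hEA : spanOf K X E ≤ spanOf K X A' := hED.trans (spanOf_mono X hDA)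
  -- dichotomy for irreducible subsets of D
  have hdich : ∀ B, IsIrred K X B → B ⊆ D → B ⊆ E ∨ spanOf K X B ≤ W := by
    intro B hBirr hBD
    by_cases hBE : B ⊆ E
    · exact Or.inl hBE
    right
    have hB2span : spanOf K X (B \ E) ≤ W := by
      rw [spanOf, Submodule.span_le]
      rintro v ⟨i, ⟨hiB, hiE⟩, rfl⟩
      have hiP : i ∈ ⋃₀ P := by rw [hPu]; exact hBD hiB
      obtain ⟨B', hB', hiB'⟩ := hiP
      have hB'mem : B' ∈ P \ {E} := ⟨hB', fun h => hiE (by rw [← h]; exact hiB')⟩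
      exact SetLike.le_def.1 (le_biSup _ hB'mem) (mem_spanOf X hiB')
    by_cases hBcapE : (B ∩ E).Nonempty
    · exfalso
      refine hBirr.2.2 ⟨B ∩ E, B \ E, hBcapE, Set.diff_nonempty.2 hBE, ?_, Set.inter_union_diff B E, ?_, ?_⟩
      · exact Set.disjoint_sdiff_right.mono_left Set.inter_subset_right
      · exact (hEW.mono (spanOf_mono X Set.inter_subset_right) hB2span)
      · rw [← spanOf_union, Set.inter_union_diff]
    · have hsub : B ⊆ B \ E := fun i hi => ⟨hi, fun hE => hBcapE ⟨i, hi, hE⟩⟩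
      exact (spanOf_mono X hsub).trans hB2span
  -- E ⊔ W = span D
  refine ⟨E, hEirr, hxE, hEsub, ?_, ?_⟩
  · rintro B (hB | rfl); exacts [hS.1 B hB, hEirr]
  intro F hF hFpair
  by_cases hEF : E ∈ F
  swap
  · have hFS : F ⊆ S := fun B hBF => (hF hBF).resolve_right (fun h => hEF (by rwa [← h]))
    exact hS.2 F hFS hFpair
  -- main case: E ∈ F
  set H := F \ {E} with hHdef
  have hHS : H ⊆ S := fun B hBH => (hF hBH.1).resolve_right (fun h => hBH.2 h)
  have hHpair : H.Pairwise (fun A B => ¬ A ⊆ B ∧ ¬ B ⊆ A) := hFpair.mono Set.diff_subset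
  have hHE : ∀ B ∈ H, ¬ B ⊆ E ∧ ¬ E ⊆ B := by
    intro B hB
    exact hFpair hB.1 hEF (fun h => hB.2 (by rw [h]; rfl))
  set G₂ := {B ∈ H | B ⊆ C} with hG2def
  set G₁ := H \ G₂ with hG1def
  have hG1S : G₁ ⊆ S := fun B hB => hHS hB.1
  have hG2S : G₂ ⊆ S := fun B hB => hHS hB.1
  have hG1cond : ∀ B ∈ G₁, ¬ B ⊆ A' ∧ ¬ A' ⊆ B := by
    intro B hB
    rcases HB B (hG1S hB) with h | h | h
    · exact absurd (⟨hB.1, h⟩ : B ∈ G₂) hB.2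
    · exact absurd (hEsub.trans (hDA.trans h)) (hHE B hB.1).2
    · exact h
  obtain ⟨hU, hcompG1⟩ := H2 G₁ hG1S (hHpair.mono Set.diff_subset) hG1cond
  set U := ⨆ B ∈ G₁, spanOf K X B with hUdef
  set Q := ⨆ B ∈ G₂, spanOf K X B with hQdef
  have hQW : Q ≤ W := by
    refine iSup₂_le fun B hB => ?_
    rcases hdich B (hS.1 B (hG2S hB)) (hB.2.trans hCD) with h | h
    · exact absurd h (hHE B hB.1).1
    · exact h
  have hQD : Q ≤ spanOf K X D := hQW.trans hWD
  have hQA : Q ≤ spanOf K X A' := hQD.trans (spanOf_mono X hDA)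
  have hHsplit : G₁ ∪ G₂ = H := Set.diff_union_of_subset (Set.sep_subset _ _)
  have hsupH : (⨆ B ∈ H, spanOf K X B) = U ⊔ Q := by rw [← hHsplit, iSup_union]
  have hFsplit : F = insert E H := by
    rw [hHdef, Set.insert_diff_singleton, Set.insert_eq_self.2 hEF]
  have hEH : E ∉ H := fun h => h.2 rfl
  have hkey : Disjoint (spanOf K X E) (U ⊔ Q) := by
    rw [sup_comm]
    exact disjoint_sup_helper hEA hQA le_rfl hU (hEW.mono_right hQW)
  have hGH : ∀ B ∈ H, B ⊆ ⋃₀ F := fun B hB => Set.subset_sUnion_of_mem hB.1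
  have hspanF : spanOf K X (⋃₀ F) = spanOf K X E ⊔ (U ⊔ Q) := by
    rw [spanOf_sUnion]
    conv_lhs => rw [hFsplit]
    rw [iSup_insert, hsupH]
  have hcomp : IsCompleteSub K X (⋃₀ F) := by
    apply Set.eq_of_subset_of_subset (subset_clo X _)
    intro i hi
    have hi0 : X i ∈ spanOf K X (⋃₀ F) := hi
    have hi' : X i ∈ spanOf K X E ⊔ (U ⊔ Q) := by rwa [hspanF] at hi0
    have h1 : X i ∈ spanOf K X (A' ∪ ⋃₀ G₁) := by
      rw [spanOf_union, spanOf_sUnion]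
      refine SetLike.le_def.1 ?_ hi'
      exact sup_le (hEA.trans le_sup_left)
        (sup_le le_sup_right (hQA.trans le_sup_left))
    have h2 : i ∈ A' ∪ ⋃₀ G₁ := mem_of_complete_of_mem_span X hcompG1 h1
    rcases h2 with h2 | h2
    swap
    · obtain ⟨B, hB, hiB⟩ := h2
      exact hGH B hB.1 hiB
    -- i ∈ A' : extract X i ∈ span E ⊔ Q
    have hi'' : X i ∈ (spanOf K X E ⊔ Q) ⊔ U := by
      rwa [sup_comm U Q, ← sup_assoc] at hi'
    obtain ⟨w, hw, u, hu, hsum⟩ := Submodule.mem_sup.1 hi''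
    have hu0 : u = 0 := by
      refine Submodule.disjoint_def.1 hU u ?_ hu
      have h : u = X i - w := by rw [← hsum]; abel
      exact h ▸ sub_mem (mem_spanOf X h2) (sup_le hEA hQA hw)
    rw [hu0, add_zero] at hsum
    rw [hsum] at hw
    -- X i = w ∈ span E ⊔ Q ≤ span D
    have hiD : i ∈ D := mem_of_complete_of_mem_span X hDcomp (sup_le hED hQD hw)
    have hiP : i ∈ ⋃₀ P := by rw [hPu]; exact hiD
    obtain ⟨B', hB', hiB'⟩ := hiP
    by_cases hB'E : B' = E
    · subst hB'E
      rw [hFsplit]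
      exact Set.subset_sUnion_of_mem (Set.mem_insert _ _) hiB'
    · have hB'mem : B' ∈ P \ {E} := ⟨hB', hB'E⟩
      have hiW : X i ∈ W :=
        SetLike.le_def.1 (le_biSup _ hB'mem) (mem_spanOf X hiB')
      obtain ⟨e, he, q, hq, hsum2⟩ := Submodule.mem_sup.1 hw
      have he0 : e = 0 := by
        refine Submodule.disjoint_def.1 hEW e he ?_
        have h : e = X i - q := by rw [← hsum2]; abel
        exact h ▸ sub_mem hiW (hQW hq)
      rw [he0, zero_add] at hsum2
      have hiQ : X i ∈ spanOf K X (⋃₀ G₂) := by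
        rw [spanOf_sUnion, ← hQdef, ← hsum2]; exact hq
      obtain ⟨hcompG2, -⟩ := hS.2 G₂ hG2S (hHpair.mono (Set.sep_subset _ _))
      obtain ⟨B'', hB'', hiB''⟩ := mem_of_complete_of_mem_span X hcompG2 hiQ
      exact hGH B'' hB''.1 hiB''
  refine ⟨hcomp, ?_, rfl, ?_, (spanOf_sUnion X F).symm⟩
  · intro B hBF
    by_cases hBE : B = E
    · exact hBE ▸ hEirr
    · exact hS.1 B ((hF hBF).resolve_right hBE)
  · intro B hBF
    by_cases hBE : B = E
    · subst hBE
      have : F \ {B} = H := rfl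
      rw [this, hsupH]
      exact hkey
    · have hBH : B ∈ H := ⟨hBF, hBE⟩
      have hFdiff : F \ {B} = insert E (H \ {B}) := by
        rw [hFsplit, Set.insert_diff_of_notMem _ (by simpa using Ne.symm hBE)]
      rw [hFdiff, iSup_insert]
      have hdisjH := (hS.2 H hHS hHpair).2.2.2.1 B hBH
      refine disjoint_insert_helper (a := spanOf K X E) (s := ⨆ B ∈ H, spanOf K X B)
        (le_biSup _ hBH) ?_ (by rw [hsupH]; exact hkey) hdisjH
      exact iSup₂_le fun C' hC' => le_biSup _ hC'.1

end Ext

section Rank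
variable {K V ι : Type*} [Field K] [AddCommGroup V] [Module K V] [FiniteDimensional K V]
  [Fintype ι] (X : ι → V)

/-- rank of an independent family is the sum of ranks -/
theorem finrank_fam : ∀ (n : ℕ) (P : Set (Set ι)), P.ncard ≤ n →
    (∀ B ∈ P, Disjoint (spanOf K X B) (⨆ C ∈ P \ {B}, spanOf K X C)) →
    Module.finrank K ↥(⨆ B ∈ P, spanOf K X B) =
      ∑ B ∈ (Set.toFinite P).toFinset, Module.finrank K ↥(spanOf K X B) := by
  classical
  intro n
  induction n with
  | zero =>
    intro P hn _
    have : P = ∅ := by rw [← Set.ncard_eq_zero (Set.toFinite P)]; omega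
    subst this
    rw [Set.Finite.toFinset_eq_empty.2 rfl]
    simp
  | succ n ih =>
    intro P hn hd
    rcases Set.eq_empty_or_nonempty P with rfl | ⟨B₀, hB₀⟩
    · rw [Set.Finite.toFinset_eq_empty.2 rfl]
      simp
    have hsplit : P = insert B₀ (P \ {B₀}) := by
      rw [Set.insert_diff_singleton, Set.insert_eq_self.2 hB₀]
    have hsup : (⨆ B ∈ P, spanOf K X B) =
        spanOf K X B₀ ⊔ ⨆ B ∈ P \ {B₀}, spanOf K X B := by
      conv_lhs => rw [hsplit]
      rw [iSup_insert]
    have hdisj : Disjoint (spanOf K X B₀) (⨆ B ∈ P \ {B₀}, spanOf K X B) := hd B₀ hB₀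
    have hd' : ∀ B ∈ P \ {B₀}, Disjoint (spanOf K X B)
        (⨆ C ∈ (P \ {B₀}) \ {B}, spanOf K X C) := by
      intro B hB
      refine (hd B hB.1).mono_right ?_
      exact iSup₂_le fun C hC => le_biSup _ ⟨hC.1.1, hC.2⟩
    have hn' : (P \ {B₀}).ncard ≤ n := by
      have h1 : (P \ {B₀}).ncard = P.ncard - 1 :=
        Set.ncard_diff_singleton_of_mem hB₀
      have h2 : 1 ≤ P.ncard := (Set.ncard_pos (Set.toFinite P)).2 ⟨B₀, hB₀⟩
      omega
    have hrank := Submodule.finrank_sup_add_finrank_inf_eq (spanOf K X B₀)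
      (⨆ B ∈ P \ {B₀}, spanOf K X B)
    rw [hdisj.eq_bot] at hrank
    have hrec := ih (P \ {B₀}) hn' hd'
    have hfs : (Set.toFinite (P \ {B₀})).toFinset = (Set.toFinite P).toFinset.erase B₀ := by
      ext B
      simp only [Set.Finite.mem_toFinset, Finset.mem_erase, Set.mem_diff,
        Set.mem_singleton_iff]
      tauto
    have h2 : 1 ≤ P.ncard := (Set.ncard_pos (Set.toFinite P)).2 ⟨B₀, hB₀⟩
    have hsum : Module.finrank K ↥(spanOf K X B₀) +
        ∑ B ∈ (Set.toFinite P).toFinset.erase B₀, Module.finrank K ↥(spanOf K X B) =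
        ∑ B ∈ (Set.toFinite P).toFinset, Module.finrank K ↥(spanOf K X B) :=
      Finset.add_sum_erase (Set.toFinite P).toFinset
        (fun B => Module.finrank K ↥(spanOf K X B)) ((Set.toFinite P).mem_toFinset.2 hB₀)
    have hbot : Module.finrank K ↥(⊥ : Submodule K V) = 0 := finrank_bot K V
    rw [hfs] at hrec
    rw [hsup]
    omega

end Rank

section Steps
variable {K V ι : Type*} [Field K] [AddCommGroup V] [Module K V] [FiniteDimensional K V]
  [Fintype ι] (X : ι → V) (hX0 : ∀ i, X i ≠ 0)
include hX0

theorem step_lemma {S : Set (Set ι)} (hS : IsNested K X S)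
    (hmax : ∀ S', IsNested K X S' → S ⊆ S' → S' = S) {A : Set ι} (hA : A ∈ S) :
    IsCompleteSub K X (⋃₀ maxBelow K X S A) ∧
    Module.finrank K ↥(spanOf K X A) =
      Module.finrank K ↥(spanOf K X (⋃₀ maxBelow K X S A)) + 1 := by
  classical
  set MA := maxBelow K X S A with hMAdef
  set C := ⋃₀ MA with hCdef
  obtain ⟨hCcomp, hMAfam⟩ := hS.2 MA (maxBelow_subset X) (maxBelow_pairwise X)
  have hCA : C ⊆ A := sUnion_maxBelow_subset X
  have hAirr := hS.1 A hA
  have hAcomp := hAirr.1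
  have hCle : spanOf K X C ≤ spanOf K X A := spanOf_mono X hCA
  -- strict inequality
  have hlt : spanOf K X C < spanOf K X A := by
    refine lt_of_le_of_ne hCle (fun heq => ?_)
    have hCCA : C = A := by
      have hCc : C = {i | X i ∈ spanOf K X C} := hCcomp
      have hAc : A = {i | X i ∈ spanOf K X A} := hAcomp
      rw [hCc, heq, ← hAc]
    rcases Set.eq_empty_or_nonempty MA with hMA0 | ⟨B₁, hB₁⟩
    · apply hAirr.2.1.ne_empty
      rw [← hCCA, hCdef, hMA0, Set.sUnion_empty]
    rcases Set.eq_empty_or_nonempty (MA \ {B₁}) with hMA1 | ⟨B₂, hB₂⟩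
    · have hMAB : MA = {B₁} := by
        apply Set.eq_of_subset_of_subset _ (Set.singleton_subset_iff.2 hB₁)
        intro B hB
        by_contra hne
        exact (Set.eq_empty_iff_forall_notMem.1 hMA1) B ⟨hB, hne⟩
      have hCB : C = B₁ := by rw [hCdef, hMAB, Set.sUnion_singleton]
      exact (hB₁.2.1.ne) (by rw [← hCB, hCCA])
    · apply hAirr.2.2
      have hspandisj : Disjoint (spanOf K X B₁) (spanOf K X (⋃₀ (MA \ {B₁}))) := by
        rw [spanOf_sUnion]
        exact hMAfam.2.2.1 B₁ hB₁
      have hMAsplit : MA = insert B₁ (MA \ {B₁}) := by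
        rw [Set.insert_diff_singleton, Set.insert_eq_self.2 hB₁]
      have hunion : B₁ ∪ ⋃₀ (MA \ {B₁}) = A := by
        rw [← hCCA, hCdef]
        conv_rhs => rw [hMAsplit]
        rw [Set.sUnion_insert]
      refine ⟨B₁, ⋃₀ (MA \ {B₁}), (hS.1 B₁ (maxBelow_subset X hB₁)).2.1, ?_, ?_, hunion, hspandisj, ?_⟩
      · obtain ⟨i, hi⟩ := (hS.1 B₂ (maxBelow_subset X hB₂.1)).2.1
        exact ⟨i, B₂, hB₂, hi⟩
      · exact set_disjoint_of_span_disjoint X hX0 hspandisj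
      · rw [← spanOf_union, hunion]
  -- upper bound
  have hub : Module.finrank K ↥(spanOf K X A) ≤ Module.finrank K ↥(spanOf K X C) + 1 := by
    by_contra hcon
    push_neg at hcon
    obtain ⟨x, hxA, hx⟩ : ∃ x ∈ A, X x ∉ spanOf K X C := by
      by_contra h
      push_neg at h
      refine hlt.ne' (le_antisymm ?_ hCle)
      rw [spanOf, Submodule.span_le]
      rintro v ⟨i, hi, rfl⟩
      exact h i hi
    have HB : ∀ B ∈ S, B ⊆ C ∨ A ⊆ B ∨ (¬ B ⊆ A ∧ ¬ A ⊆ B) := by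
      intro B hB
      by_cases h1 : B ⊆ A
      · by_cases h2 : A ⊆ B
        · exact Or.inr (Or.inl h2)
        · obtain ⟨M, hM, hBM⟩ := exists_maxBelow (K := K) X hB ⟨h1, h2⟩
          exact Or.inl (hBM.trans (Set.subset_sUnion_of_mem hM))
      · by_cases h2 : A ⊆ B
        · exact Or.inr (Or.inl h2)
        · exact Or.inr (Or.inr ⟨h1, h2⟩)
    have H2 : ∀ G ⊆ S, (G.Pairwise fun A B => ¬ A ⊆ B ∧ ¬ B ⊆ A) →
        (∀ B ∈ G, ¬ B ⊆ A ∧ ¬ A ⊆ B) →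
        Disjoint (spanOf K X A) (⨆ B ∈ G, spanOf K X B) ∧
        IsCompleteSub K X (A ∪ ⋃₀ G) := by
      intro G hG hGpair hGcond
      have hAG : A ∉ G := fun h => (hGcond A h).1 subset_rfl
      have hpair' : (insert A G).Pairwise (fun A B => ¬ A ⊆ B ∧ ¬ B ⊆ A) := by
        refine hGpair.insert (fun B hB _ => ?_)
        exact ⟨⟨(hGcond B hB).2, (hGcond B hB).1⟩, ⟨(hGcond B hB).1, (hGcond B hB).2⟩⟩
      obtain ⟨hcomp', hfam'⟩ := hS.2 (insert A G) (Set.insert_subset hA hG) hpair'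
      constructor
      · have hd := hfam'.2.2.1 A (Set.mem_insert _ _)
        have : insert A G \ {A} = G := by
          rw [Set.insert_diff_of_mem _ (Set.mem_singleton A), Set.diff_singleton_eq_self hAG]
        rwa [this] at hd
      · rwa [Set.sUnion_insert] at hcomp'
    obtain ⟨E, hEirr, hxE, hEclo, hSE⟩ := ext_lemma X hX0 hS hAcomp hCA hxA HB H2
    have hcloA : clo K X (C ∪ {x}) ⊆ A := by
      intro i hi
      have hi' : X i ∈ spanOf K X (C ∪ {x}) := hi
      refine mem_of_complete_of_mem_span X hAcomp ?_
      refine SetLike.le_def.1 ?_ hi'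
      rw [spanOf_union]
      refine sup_le hCle ?_
      rw [spanOf, Set.image_singleton, Submodule.span_le, Set.singleton_subset_iff]
      exact mem_spanOf X hxA
    have hES : E ∈ S := by
      have heq := hmax (S ∪ {E}) hSE Set.subset_union_left
      rw [← heq]
      exact Or.inr rfl
    rcases HB E hES with h | h | h
    · exact hx (SetLike.le_def.1 (spanOf_mono X h) (mem_spanOf X hxE))
    · -- A ⊆ E : rank contradiction
      have h1 : spanOf K X A ≤ spanOf K X (C ∪ {x}) := by
        refine (spanOf_mono X (h.trans hEclo)).trans ?_
        rw [spanOf_clo]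
      have h2 : Module.finrank K ↥(spanOf K X (C ∪ {x})) ≤
          Module.finrank K ↥(spanOf K X C) + 1 := by
        rw [spanOf_union]
        have h3 := Submodule.finrank_sup_add_finrank_inf_eq (spanOf K X C)
          (spanOf K X ({x} : Set ι))
        have h4 : Module.finrank K ↥(spanOf K X ({x} : Set ι)) = 1 := by
          rw [spanOf, Set.image_singleton]
          exact finrank_span_singleton (hX0 x)
        omega
      exact hcon.not_ge ((Submodule.finrank_mono h1).trans h2)
    · exact h.1 (hEclo.trans hcloA)
  exact ⟨hCcomp, le_antisymm hub (Nat.succ_le_of_lt (Submodule.finrank_lt_finrank_of_lt hlt))⟩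

theorem top_lemma (hspan : Submodule.span K (Set.range X) = ⊤)
    {S : Set (Set ι)} (hS : IsNested K X S)
    (hmax : ∀ S', IsNested K X S' → S ⊆ S' → S' = S) :
    spanOf K X (⋃₀ {B | B ∈ S ∧ ∀ B' ∈ S, B ⊆ B' → B' = B}) = ⊤ := by
  classical
  set Mx := {B | B ∈ S ∧ ∀ B' ∈ S, B ⊆ B' → B' = B} with hMxdef
  set C := ⋃₀ Mx with hCdef
  by_contra hC
  obtain ⟨x, hx⟩ : ∃ x, X x ∉ spanOf K X C := by
    by_contra h
    push_neg at h
    apply hC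
    rw [← top_le_iff, ← hspan, Submodule.span_le]
    rintro v ⟨i, rfl⟩
    exact h i
  have hA'comp : IsCompleteSub K X (Set.univ : Set ι) := by
    apply Set.eq_of_subset_of_subset
    · exact fun i _ => mem_spanOf X (Set.mem_univ i)
    · exact fun i _ => Set.mem_univ i
  have hCA : C ⊆ Set.univ := Set.subset_univ C
  have HB : ∀ B ∈ S, B ⊆ C ∨ Set.univ ⊆ B ∨ (¬ B ⊆ Set.univ ∧ ¬ Set.univ ⊆ B) := by
    intro B hB
    obtain ⟨M, hM, hBM⟩ := exists_maxS hB
    exact Or.inl (hBM.trans (Set.subset_sUnion_of_mem hM))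
  have H2 : ∀ G ⊆ S, (G.Pairwise fun A B => ¬ A ⊆ B ∧ ¬ B ⊆ A) →
      (∀ B ∈ G, ¬ B ⊆ Set.univ ∧ ¬ Set.univ ⊆ B) →
      Disjoint (spanOf K X (Set.univ : Set ι)) (⨆ B ∈ G, spanOf K X B) ∧
      IsCompleteSub K X (Set.univ ∪ ⋃₀ G) := by
    intro G hG hGpair hGcond
    have hG0 : G = ∅ := by
      rw [Set.eq_empty_iff_forall_notMem]
      exact fun B hB => (hGcond B hB).1 (Set.subset_univ B)
    subst hG0
    constructor
    · simp
    · simpa using hA'comp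
  obtain ⟨E, hEirr, hxE, hEclo, hSE⟩ :=
    ext_lemma X hX0 hS hA'comp hCA (Set.mem_univ x) HB H2
  have hES : E ∈ S := by
    have heq := hmax (S ∪ {E}) hSE Set.subset_union_left
    rw [← heq]
    exact Or.inr rfl
  rcases HB E hES with h | h | h
  · exact hx (SetLike.le_def.1 (spanOf_mono X h) (mem_spanOf X hxE))
  · obtain ⟨M, hM, hEM⟩ := exists_maxS hES
    exact hx (SetLike.le_def.1 (spanOf_mono X ((h.trans hEM).trans
      (Set.subset_sUnion_of_mem hM))) (mem_spanOf X (Set.mem_univ x)))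
  · exact h.1 (Set.subset_univ E)

end Steps

section Parent
variable {K V ι : Type*} [Field K] [AddCommGroup V] [Module K V] [Fintype ι] (X : ι → V)

theorem mem_maxBelow_parent {S : Set (Set ι)} {B A₀ : Set ι} (hB : B ∈ S)
    (hA₀ : A₀ ∈ S) (hBA : B ⊂ A₀) : ∃ A ∈ S, B ∈ maxBelow K X S A := by
  classical
  have hfin : {A ∈ S | B ⊂ A}.Finite := Set.toFinite _
  obtain ⟨p, hp, hmin⟩ := hfin.exists_minimal_wrt id _ ⟨A₀, hA₀, hBA⟩
  refine ⟨p, hp.1, hB, hp.2, fun B' hB' hB'p hBB' => ?_⟩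
  by_contra hne
  have hBB'ss : B ⊂ B' := ⟨hBB', fun h => hne (Set.eq_of_subset_of_subset hBB' h).symm⟩
  have := hmin B' ⟨hB', hBB'ss⟩ hB'p.subset
  exact hB'p.ne' (by simpa using this)

theorem maxBelow_disjointed (hX0 : ∀ i, X i ≠ 0) {S : Set (Set ι)} (hS : IsNested K X S)
    {A₁ A₂ : Set ι} (hA₁ : A₁ ∈ S) (hA₂ : A₂ ∈ S) (hne : A₁ ≠ A₂) {B : Set ι}
    (h₁ : B ∈ maxBelow K X S A₁) (h₂ : B ∈ maxBelow K X S A₂) : False := by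
  obtain ⟨i, hi⟩ := (hS.1 B (maxBelow_subset X h₁)).2.1
  rcases nested_comparable X hS hX0 hA₁ hA₂ (h₁.2.1.subset hi) (h₂.2.1.subset hi) with h | h
  · have hss : A₁ ⊂ A₂ := ⟨h, fun h' => hne (Set.eq_of_subset_of_subset h h')⟩
    have := h₂.2.2 A₁ hA₁ hss h₁.2.1.subset
    exact h₁.2.1.ne' this
  · have hss : A₂ ⊂ A₁ := ⟨h, fun h' => hne (Set.eq_of_subset_of_subset h' h)⟩
    have := h₁.2.2 A₂ hA₂ hss h₂.2.1.subset
    exact h₂.2.1.ne' this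

end Parent


/-- a maximal nested set `S` has exactly `s = dim V` elements; moreover
for `A ∈ S`, the union `C` of the maximal elements of `S` properly contained in `A`
is complete and `dim span(A) = dim span(C) + 1`. -/
theorem maximal_nested_set
    {K V ι : Type*} [Field K] [AddCommGroup V] [Module K V] [FiniteDimensional K V]
    [Fintype ι] (X : ι → V) (hX0 : ∀ i, X i ≠ 0)
    (hspan : Submodule.span K (Set.range X) = ⊤)
    (S : Set (Set ι)) (hS : IsNested K X S)
    (hmax : ∀ S', IsNested K X S' → S ⊆ S' → S' = S) :
    S.ncard = Module.finrank K V ∧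
    ∀ A ∈ S,
      IsCompleteSub K X
        (⋃₀ {B | B ∈ S ∧ B ⊂ A ∧ ∀ B' ∈ S, B' ⊂ A → B ⊆ B' → B' = B}) ∧
      Module.finrank K ↥(spanOf K X A) =
        Module.finrank K
          ↥(spanOf K X
            (⋃₀ {B | B ∈ S ∧ B ⊂ A ∧ ∀ B' ∈ S, B' ⊂ A → B ⊆ B' → B' = B})) + 1 := by
  classical
  have hpart2 : ∀ A ∈ S, IsCompleteSub K X (⋃₀ maxBelow K X S A) ∧
      Module.finrank K ↥(spanOf K X A) =
        Module.finrank K ↥(spanOf K X (⋃₀ maxBelow K X S A)) + 1 :=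
    fun A hA => step_lemma X hX0 hS hmax hA
  refine ⟨?_, hpart2⟩
  have hSfin : S.Finite := Set.toFinite S
  set d : Set ι → ℕ := fun B => Module.finrank K ↥(spanOf K X B) with hd
  have hAeq : ∀ A ∈ S, d A =
      (∑ B ∈ (Set.toFinite (maxBelow K X S A)).toFinset, d B) + 1 := by
    intro A hA
    have h1 := (hpart2 A hA).2
    have h2 : Module.finrank K ↥(spanOf K X (⋃₀ maxBelow K X S A)) =
        ∑ B ∈ (Set.toFinite (maxBelow K X S A)).toFinset, d B := by
      rw [spanOf_sUnion]
      exact finrank_fam X (Set.ncard (maxBelow K X S A)) _ le_rfl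
        ((hS.2 _ (maxBelow_subset X) (maxBelow_pairwise X)).2.2.2.1)
    rw [h2] at h1
    exact h1
  set Mx := {B | B ∈ S ∧ ∀ B' ∈ S, B ⊆ B' → B' = B} with hMx
  have hMxsub : Mx ⊆ S := fun B hB => hB.1
  have hMxpair : Mx.Pairwise (fun A B => ¬ A ⊆ B ∧ ¬ B ⊆ A) := by
    intro B₁ h₁ B₂ h₂ hne
    constructor
    · exact fun h => hne ((h₁.2 B₂ h₂.1 h).symm)
    · exact fun h => hne (h₂.2 B₁ h₁.1 h)
  have hMxrank : ∑ B ∈ (Set.toFinite Mx).toFinset, d B = Module.finrank K V := by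
    have hfam := finrank_fam X (Set.ncard Mx) Mx le_rfl
      ((hS.2 Mx hMxsub hMxpair).2.2.2.1)
    rw [← spanOf_sUnion] at hfam
    rw [top_lemma X hX0 hspan hS hmax] at hfam
    rw [← hfam]
    exact finrank_top K V
  set NMf := hSfin.toFinset.filter (fun B => ∃ A ∈ S, B ⊂ A) with hNMf
  have hMxf : (Set.toFinite Mx).toFinset = hSfin.toFinset \ NMf := by
    ext B
    simp only [Set.Finite.mem_toFinset, Finset.mem_sdiff, hNMf, Finset.mem_filter, hMx,
      Set.mem_setOf_eq]
    constructor
    · rintro ⟨hBS, hmaxB⟩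
      refine ⟨hBS, fun h => ?_⟩
      obtain ⟨-, A, hA, hBA⟩ := h
      exact hBA.ne' (hmaxB A hA hBA.subset)
    · rintro ⟨hBS, hnm⟩
      refine ⟨hBS, fun B' hB' hBB' => ?_⟩
      by_contra hne
      exact hnm ⟨hBS, B', hB', hBB', fun h => hne (Set.eq_of_subset_of_subset hBB' h).symm⟩
  have hbiU : hSfin.toFinset.biUnion
      (fun A => (Set.toFinite (maxBelow K X S A)).toFinset) = NMf := by
    ext B
    simp only [Finset.mem_biUnion, Set.Finite.mem_toFinset, hNMf, Finset.mem_filter]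
    constructor
    · rintro ⟨A, hA, hBA⟩
      exact ⟨hBA.1, A, hA, hBA.2.1⟩
    · rintro ⟨hBS, A, hA, hBA⟩
      obtain ⟨A', hA', hBA'⟩ := mem_maxBelow_parent (K := K) X hBS hA hBA
      exact ⟨A', hA', hBA'⟩
  have hdisjf : (↑hSfin.toFinset : Set (Set ι)).PairwiseDisjoint
      (fun A => (Set.toFinite (maxBelow K X S A)).toFinset) := by
    intro A₁ h₁ A₂ h₂ hne
    simp only [Finset.coe_mem, Set.Finite.coe_toFinset] at h₁ h₂
    simp only [Function.onFun]
    rw [Finset.disjoint_left]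
    intro B hB₁ hB₂
    exact maxBelow_disjointed X hX0 hS (by simpa using h₁) (by simpa using h₂) hne
      ((Set.toFinite _).mem_toFinset.1 hB₁) ((Set.toFinite _).mem_toFinset.1 hB₂)
  have hsum1 : ∑ A ∈ hSfin.toFinset, d A =
      (∑ A ∈ hSfin.toFinset, ∑ B ∈ (Set.toFinite (maxBelow K X S A)).toFinset, d B) +
        hSfin.toFinset.card := by
    calc ∑ A ∈ hSfin.toFinset, d A
        = ∑ A ∈ hSfin.toFinset,
            ((∑ B ∈ (Set.toFinite (maxBelow K X S A)).toFinset, d B) + 1) :=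
          Finset.sum_congr rfl (fun A hA => hAeq A (hSfin.mem_toFinset.1 hA))
      _ = _ := by rw [Finset.sum_add_distrib, Finset.sum_const, smul_eq_mul, mul_one]
  have hsum2 : (∑ A ∈ hSfin.toFinset, ∑ B ∈ (Set.toFinite (maxBelow K X S A)).toFinset, d B)
      = ∑ B ∈ NMf, d B := by
    rw [← hbiU, Finset.sum_biUnion hdisjf]
  have hsum3 : ∑ A ∈ hSfin.toFinset, d A = ∑ B ∈ hSfin.toFinset \ NMf, d B + ∑ B ∈ NMf, d B :=
    (Finset.sum_sdiff (Finset.filter_subset _ _)).symm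
  have hcard : S.ncard = hSfin.toFinset.card := Set.ncard_eq_toFinset_card S hSfin
  rw [hMxf] at hMxrank
  omega
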